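/- Let N ≥ 1, b₁, …, b_N ∈ ℝ, let V : (0,∞)^N → ℝ be differentiable, and let q, q' ∈ (0,∞)^N, p, p' ∈ ℝ^N satisfy bₖ ≤ qₖ²·q'ₖ² and the update equations q'ₖ·√(1 − bₖ/(qₖ²·q'ₖ²)) + pₖ = ∂V/∂qₖ(q) and p'ₖ = qₖ·√(1 − bₖ/(qₖ²·q'ₖ²)) for each k. Then the Casimir C(q,p) = J₊(q,p)·J₋(q,p) − J₃(q,p)² satisfies C(q',p') − C(q,p) = −2·(Σₖ qₖ²)·(Σₖ pₖ·∂V/∂qₖ(q)) + (Σₖ qₖ²)·(Σₖ (∂V/∂qₖ(q))²) + 2·(Σₖ qₖ·pₖ)·(Σₖ qₖ·∂V/∂qₖ(q)) − (Σₖ qₖ·∂V/∂qₖ(q))². -/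
import Mathlib


open Finset

theorem casimir_evolution (N : ℕ) (hN : 1 ≤ N) (b : Fin N → ℝ)
    (V : (Fin N → ℝ) → ℝ)
    (hV : ∀ q : Fin N → ℝ, (∀ k, 0 < q k) → DifferentiableAt ℝ V q)
    (q q' p p' : Fin N → ℝ)
    (hq : ∀ k, 0 < q k) (hq' : ∀ k, 0 < q' k)
    (hb : ∀ k, b k ≤ (q k) ^ 2 * (q' k) ^ 2)
    (hup1 : ∀ k, q' k * Real.sqrt (1 - b k / ((q k) ^ 2 * (q' k) ^ 2)) + p k
        = fderiv ℝ V q (Pi.single k 1))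
    (hup2 : ∀ k, p' k = q k * Real.sqrt (1 - b k / ((q k) ^ 2 * (q' k) ^ 2))) :
    ((∑ k, ((p' k) ^ 2 + b k / (q' k) ^ 2)) * (∑ k, (q' k) ^ 2)
        - (∑ k, q' k * p' k) ^ 2)
      - ((∑ k, ((p k) ^ 2 + b k / (q k) ^ 2)) * (∑ k, (q k) ^ 2)
        - (∑ k, q k * p k) ^ 2)
    = -2 * (∑ k, (q k) ^ 2) * (∑ k, p k * fderiv ℝ V q (Pi.single k 1))
      + (∑ k, (q k) ^ 2) * (∑ k, (fderiv ℝ V q (Pi.single k 1)) ^ 2)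
      + 2 * (∑ k, q k * p k) * (∑ k, q k * fderiv ℝ V q (Pi.single k 1))
      - (∑ k, q k * fderiv ℝ V q (Pi.single k 1)) ^ 2 := by
  set v : Fin N → ℝ := fun k => fderiv ℝ V q (Pi.single k 1) with hv
  set s : Fin N → ℝ := fun k => Real.sqrt (1 - b k / ((q k) ^ 2 * (q' k) ^ 2)) with hs
  have hq0 : ∀ k, (q k) ≠ 0 := fun k => (hq k).ne'
  have hq'0 : ∀ k, (q' k) ≠ 0 := fun k => (hq' k).ne'
  have hs2 : ∀ k, (s k) ^ 2 = 1 - b k / ((q k) ^ 2 * (q' k) ^ 2) := by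
    intro k
    apply Real.sq_sqrt
    have hpos : 0 < (q k) ^ 2 * (q' k) ^ 2 :=
      mul_pos (pow_pos (hq k) 2) (pow_pos (hq' k) 2)
    rw [sub_nonneg, div_le_one hpos]
    exact hb k
  have hqs : ∀ k, q' k * s k = v k - p k := by
    intro k
    have := hup1 k
    simp only [hv] at *
    linarith
  have h1 : ∀ k, (p' k) ^ 2 + b k / (q' k) ^ 2 = (q k) ^ 2 := by
    intro k
    have ha := hq0 k
    have hb' := hq'0 k
    rw [hup2 k, mul_pow, hs2 k]
    field_simp
    ring
  have h2 : ∀ k, q' k * p' k = q k * (v k - p k) := by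
    intro k
    rw [hup2 k, ← hqs k]
    ring
  have h3 : ∀ k, (q' k) ^ 2 = (v k - p k) ^ 2 + b k / (q k) ^ 2 := by
    intro k
    have ha := hq0 k
    have hb' := hq'0 k
    rw [← hqs k, mul_pow, hs2 k]
    field_simp
    ring
  have e1 : ∑ k, ((p' k) ^ 2 + b k / (q' k) ^ 2) = ∑ k, (q k) ^ 2 :=
    Finset.sum_congr rfl fun k _ => h1 k
  have e2 : ∑ k, q' k * p' k = (∑ k, q k * v k) - ∑ k, q k * p k := by
    rw [← Finset.sum_sub_distrib]
    exact Finset.sum_congr rfl fun k _ => by rw [h2 k]; ring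
  have e3 : ∑ k, (q' k) ^ 2
      = (∑ k, (v k) ^ 2) - 2 * (∑ k, p k * v k)
        + ∑ k, ((p k) ^ 2 + b k / (q k) ^ 2) := by
    rw [Finset.mul_sum, ← Finset.sum_sub_distrib, ← Finset.sum_add_distrib]
    exact Finset.sum_congr rfl fun k _ => by rw [h3 k]; ring
  rw [e1, e2, e3]
  ring
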